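/- arXiv:1511.09389 — 4 statements merged into one kernel-verified Lean document; each statement's English description precedes it below -/
import Mathlib

section
/- Let 𝒮 be a class of hypergraphs that is closed under isomorphism and closed under adding twins. Then for every m ∈ ℕ there exists a number ψ(m) ∈ ℕ such that for every hypergraph H = (V, ℰ) with exactly m hyperedges and every vertex v ∈ V whose twin class contains more than ψ(m) vertices, we have H ∈ 𝒮 if and only if the hypergraph obtained from H by deleting v is in 𝒮. -/
/-- A (raw) hypergraph: a finite vertex set `V ⊆ ℕ` together with a finite
family of hyperedges. Validity (edges being nonempty subsets of `V`) is
captured by the predicate `FinHypergraph.Legal`. -/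
structure FinHypergraph where
  V : Finset ℕ
  E : Finset (Finset ℕ)

namespace FinHypergraph

/-- `H` is a legal hypergraph: every hyperedge is a nonempty subset of the
vertex set (hyperedges of size one are allowed). -/
def Legal (H : FinHypergraph) : Prop :=
  ∀ F ∈ H.E, F ⊆ H.V ∧ F.Nonempty

/-- `ℰ(v)`: the set of hyperedges incident with `v`. -/
def edgesAt (H : FinHypergraph) (v : ℕ) : Finset (Finset ℕ) :=
  H.E.filter (fun F => v ∈ F)

/-- The twin class of `v`: all vertices `u ∈ V` with `ℰ(u) = ℰ(v)`. -/
def twinClass (H : FinHypergraph) (v : ℕ) : Finset ℕ :=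
  H.V.filter (fun u => H.edgesAt u = H.edgesAt v)

/-- The hypergraph obtained from `H` by deleting the vertex `v`:
`(V ∖ {v}, {F ∖ {v} : F ∈ ℰ})`. -/
def delete (H : FinHypergraph) (v : ℕ) : FinHypergraph where
  V := H.V.erase v
  E := H.E.image (fun F => F.erase v)

/-- The hypergraph obtained from `H` by adding the new vertex `v'` as a twin of
`v`: `(V ∪ {v'}, {F ∪ {v'} : F ∈ ℰ, v ∈ F} ∪ {F ∈ ℰ : v ∉ F})`. -/
def addTwin (H : FinHypergraph) (v v' : ℕ) : FinHypergraph where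
  V := insert v' H.V
  E := H.E.image (fun F => if v ∈ F then insert v' F else F)

/-- `H` and `H'` are isomorphic: some bijection between their vertex sets maps
the hyperedge family of `H` onto that of `H'`. -/
def Isomorphic (H H' : FinHypergraph) : Prop :=
  ∃ f : ℕ → ℕ, Set.BijOn f (H.V : Set ℕ) (H'.V : Set ℕ) ∧
    H.E.image (fun F => F.image f) = H'.E

end FinHypergraph

namespace FinHypergraph

open Finset

lemma hext {H K : FinHypergraph} (h1 : H.V = K.V) (h2 : H.E = K.E) : H = K := by
  cases H; cases K; cases h1; cases h2; rfl

lemma mem_edgesAt {H : FinHypergraph} {v : ℕ} {F : Finset ℕ} :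
    F ∈ H.edgesAt v ↔ F ∈ H.E ∧ v ∈ F := by
  simp [edgesAt]

lemma edgesAt_subset (H : FinHypergraph) (v : ℕ) : H.edgesAt v ⊆ H.E :=
  filter_subset _ _

/-- The number of vertices whose set of incident edges is exactly `t`. -/
def classCount (H : FinHypergraph) (t : Finset (Finset ℕ)) : ℕ :=
  (H.V.filter (fun u => H.edgesAt u = t)).card

lemma classCount_eq_twinClass_card (H : FinHypergraph) (v : ℕ) :
    H.classCount (H.edgesAt v) = (H.twinClass v).card := rfl

/-- Cancel `Finset.image` along a map injective on a superset. -/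
lemma image_cancel {α β : Type*} [DecidableEq α] [DecidableEq β] {f : α → β} {s : Set α}
    (hf : Set.InjOn f s) {t₁ t₂ : Finset α} (h₁ : ↑t₁ ⊆ s) (h₂ : ↑t₂ ⊆ s)
    (h : t₁.image f = t₂.image f) : t₁ = t₂ := by
  ext a
  constructor
  · intro ha
    have : f a ∈ t₂.image f := h ▸ mem_image_of_mem f ha
    obtain ⟨b, hb, hba⟩ := mem_image.1 this
    rwa [← hf (h₂ hb) (h₁ ha) hba]
  · intro ha
    have : f a ∈ t₁.image f := h.symm ▸ mem_image_of_mem f ha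
    obtain ⟨b, hb, hba⟩ := mem_image.1 this
    rwa [← hf (h₁ hb) (h₂ ha) hba]

lemma exists_bijOn_of_card_eq {s t : Finset ℕ} (h : s.card = t.card) :
    ∃ g : ℕ → ℕ, Set.BijOn g ↑s ↑t := by
  classical
  let e := Finset.equivOfCardEq h
  refine ⟨fun x => if hx : x ∈ s then (e ⟨x, hx⟩ : ℕ) else x, ?_, ?_, ?_⟩
  · intro x hx
    simp only [Finset.mem_coe] at hx
    simp only [hx, dif_pos]
    exact (e ⟨x, hx⟩).2
  · intro x hx y hy hxy
    simp only [Finset.mem_coe] at hx hy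
    simp only [hx, hy, dif_pos] at hxy
    have := e.injective (Subtype.ext hxy)
    exact congrArg Subtype.val this
  · intro y hy
    simp only [Finset.mem_coe] at hy
    refine ⟨(e.symm ⟨y, hy⟩ : ℕ), (e.symm ⟨y, hy⟩).2, ?_⟩
    have hm : ((e.symm ⟨y, hy⟩ : ℕ)) ∈ s := (e.symm ⟨y, hy⟩).2
    simp only [hm, dif_pos]
    have : (⟨(e.symm ⟨y, hy⟩ : ℕ), hm⟩ : {x // x ∈ s}) = e.symm ⟨y, hy⟩ := Subtype.ext rfl
    rw [this, e.apply_symm_apply]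


lemma isomorphic_of_counts (H H' : FinHypergraph) (φ : Finset ℕ → Finset ℕ)
    (hL : H.Legal) (hL' : H'.Legal)
    (hinj : Set.InjOn φ ↑H.E) (himg : H.E.image φ = H'.E)
    (hrev : ∀ w ∈ H'.V, ∃ u ∈ H.V, H'.edgesAt w = (H.edgesAt u).image φ)
    (hcnt : ∀ u ∈ H.V, H.classCount (H.edgesAt u) = H'.classCount ((H.edgesAt u).image φ)) :
    H.Isomorphic H' := by
  classical
  set A : Finset (Finset ℕ) → Finset ℕ :=
    fun t => H.V.filter (fun u => H.edgesAt u = t) with hA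
  set B : Finset (Finset ℕ) → Finset ℕ :=
    fun t => H'.V.filter (fun w => H'.edgesAt w = t.image φ) with hB
  have hcard : ∀ u ∈ H.V, (A (H.edgesAt u)).card = (B (H.edgesAt u)).card := by
    intro u hu
    exact hcnt u hu
  set G : Finset (Finset ℕ) → (ℕ → ℕ) :=
    fun t => if h : (A t).card = (B t).card then (exists_bijOn_of_card_eq h).choose else id
      with hG
  have hGspec : ∀ t, (A t).card = (B t).card → Set.BijOn (G t) ↑(A t) ↑(B t) := by
    intro t h
    simp only [hG, dif_pos h]
    exact (exists_bijOn_of_card_eq h).choose_spec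
  set f : ℕ → ℕ := fun u => G (H.edgesAt u) u with hf
  have hmemA : ∀ u ∈ H.V, u ∈ A (H.edgesAt u) := by
    intro u hu; simp [hA, hu]
  -- f maps a vertex into the corresponding class of H'
  have hfB : ∀ u ∈ H.V, f u ∈ B (H.edgesAt u) := by
    intro u hu
    have := (hGspec _ (hcard u hu)).mapsTo (by simpa using hmemA u hu)
    simpa using this
  have hfV : ∀ u ∈ H.V, f u ∈ H'.V := by
    intro u hu
    exact (mem_filter.1 (hfB u hu)).1
  have hfedges : ∀ u ∈ H.V, H'.edgesAt (f u) = (H.edgesAt u).image φ := by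
    intro u hu
    exact (mem_filter.1 (hfB u hu)).2
  -- injectivity
  have hinjf : Set.InjOn f ↑H.V := by
    intro u₁ hu₁ u₂ hu₂ h12
    simp only [Finset.mem_coe] at hu₁ hu₂
    have he : H.edgesAt u₁ = H.edgesAt u₂ := by
      apply image_cancel hinj (by exact_mod_cast edgesAt_subset H u₁)
        (by exact_mod_cast edgesAt_subset H u₂)
      rw [← hfedges u₁ hu₁, ← hfedges u₂ hu₂, h12]
    have hbij := hGspec (H.edgesAt u₁) (hcard u₁ hu₁)
    have := hbij.injOn (by simpa using hmemA u₁ hu₁)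
      (by simpa using (he ▸ hmemA u₂ hu₂)) (by simpa [hf, he] using h12)
    exact this
  -- surjectivity
  have hsurj : ∀ w ∈ H'.V, ∃ u ∈ H.V, f u = w := by
    intro w hw
    obtain ⟨u, hu, hwu⟩ := hrev w hw
    have hwB : w ∈ B (H.edgesAt u) := by simp [hB, hw, hwu]
    obtain ⟨x, hx, hxw⟩ := (hGspec _ (hcard u hu)).surjOn (by simpa using hwB)
    simp only [Finset.mem_coe] at hx
    have hxV : x ∈ H.V := (mem_filter.1 hx).1
    have hxe : H.edgesAt x = H.edgesAt u := (mem_filter.1 hx).2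
    exact ⟨x, hxV, by simpa [hf, hxe] using hxw⟩
  refine ⟨f, ⟨?_, hinjf, ?_⟩, ?_⟩
  · intro u hu
    simpa using hfV u (by simpa using hu)
  · intro w hw
    obtain ⟨u, hu, huw⟩ := hsurj w (by simpa using hw)
    exact ⟨u, by simpa using hu, huw⟩
  · have hFf : ∀ F ∈ H.E, F.image f = φ F := by
      intro F hF
      apply Finset.Subset.antisymm
      · intro x hx
        obtain ⟨u, hu, hux⟩ := mem_image.1 hx
        have huV : u ∈ H.V := (hL F hF).1 hu
        have : φ F ∈ (H.edgesAt u).image φ :=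
          mem_image_of_mem φ (mem_edgesAt.2 ⟨hF, hu⟩)
        rw [← hfedges u huV] at this
        exact hux ▸ (mem_edgesAt.1 this).2
      · intro y hy
        have hφF : φ F ∈ H'.E := himg ▸ mem_image_of_mem φ hF
        have hyV : y ∈ H'.V := (hL' _ hφF).1 hy
        obtain ⟨u, hu, huy⟩ := hsurj y hyV
        have : φ F ∈ H'.edgesAt y := mem_edgesAt.2 ⟨hφF, hy⟩
        rw [← huy, hfedges u hu] at this
        obtain ⟨F₁, hF₁, hF₁F⟩ := mem_image.1 this
        have : F₁ = F := hinj (by exact_mod_cast edgesAt_subset H u hF₁)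
          (by exact_mod_cast hF) hF₁F
        subst this
        exact huy ▸ mem_image_of_mem f (mem_edgesAt.1 hF₁).2
    calc H.E.image (fun F => F.image f) = H.E.image φ := Finset.image_congr hFf
    _ = H'.E := himg


section AddTwin

variable {H : FinHypergraph} {u₀ u' : ℕ}

/-- The edge transformation of `addTwin`. -/
def tw (u₀ u' : ℕ) : Finset ℕ → Finset ℕ := fun F => if u₀ ∈ F then insert u' F else F

lemma addTwin_V : (H.addTwin u₀ u').V = insert u' H.V := rfl

lemma addTwin_E : (H.addTwin u₀ u').E = H.E.image (tw u₀ u') := rfl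

lemma not_mem_of_legal (hL : H.Legal) (hu' : u' ∉ H.V) : ∀ F ∈ H.E, u' ∉ F :=
  fun F hF h => hu' ((hL F hF).1 h)

lemma tw_injOn (hL : H.Legal) (hu' : u' ∉ H.V) : Set.InjOn (tw u₀ u') ↑H.E := by
  intro F₁ h₁ F₂ h₂ h
  simp only [Finset.mem_coe] at h₁ h₂
  have n₁ := not_mem_of_legal hL hu' F₁ h₁
  have n₂ := not_mem_of_legal hL hu' F₂ h₂
  by_cases c₁ : u₀ ∈ F₁ <;> by_cases c₂ : u₀ ∈ F₂ <;>
    simp only [tw, c₁, c₂, if_pos, if_neg, if_true, if_false] at h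
  · have := congrArg (fun s => Finset.erase s u') h
    simpa [Finset.erase_insert, n₁, n₂, Finset.erase_eq_of_notMem] using this
  · exact absurd (h ▸ Finset.mem_insert_self u' F₁) n₂
  · exact absurd (h.symm ▸ Finset.mem_insert_self u' F₂) n₁
  · exact h

lemma addTwin_legal (hL : H.Legal) (hu₀ : u₀ ∈ H.V) : (H.addTwin u₀ u').Legal := by
  intro G hG
  obtain ⟨F, hF, rfl⟩ := mem_image.1 hG
  constructor
  · by_cases c : u₀ ∈ F <;> simp only [c, if_pos, if_neg, if_true, if_false]
    · exact Finset.insert_subset_insert u' ((hL F hF).1)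
    · exact ((hL F hF).1).trans (Finset.subset_insert _ _)
  · by_cases c : u₀ ∈ F <;> simp only [c, if_pos, if_neg, if_true, if_false]
    · exact Finset.insert_nonempty _ _
    · exact (hL F hF).2

lemma mem_tw_iff (hL : H.Legal) (hu' : u' ∉ H.V) {w : ℕ} (hw : w ∈ H.V) {F : Finset ℕ}
    (hF : F ∈ H.E) : w ∈ tw u₀ u' F ↔ w ∈ F := by
  have : w ≠ u' := fun h => hu' (h ▸ hw)
  by_cases c : u₀ ∈ F <;> simp [tw, c, this]

lemma mem_tw_new_iff (hL : H.Legal) (hu' : u' ∉ H.V) {F : Finset ℕ}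
    (hF : F ∈ H.E) : u' ∈ tw u₀ u' F ↔ u₀ ∈ F := by
  have := not_mem_of_legal hL hu' F hF
  by_cases c : u₀ ∈ F <;> simp [tw, c, this]

lemma edgesAt_addTwin (hL : H.Legal) (hu' : u' ∉ H.V) {w : ℕ} (hw : w ∈ H.V) :
    (H.addTwin u₀ u').edgesAt w = (H.edgesAt w).image (tw u₀ u') := by
  show ((H.E.image (tw u₀ u')).filter (fun F => w ∈ F)) = _
  rw [Finset.filter_image]
  congr 1
  apply Finset.filter_congr
  intro F hF
  exact mem_tw_iff hL hu' hw hF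

lemma edgesAt_addTwin_new (hL : H.Legal) (hu' : u' ∉ H.V) :
    (H.addTwin u₀ u').edgesAt u' = (H.edgesAt u₀).image (tw u₀ u') := by
  show ((H.E.image (tw u₀ u')).filter (fun F => u' ∈ F)) = _
  rw [Finset.filter_image]
  congr 1
  apply Finset.filter_congr
  intro F hF
  exact mem_tw_new_iff hL hu' hF

lemma classCount_addTwin (hL : H.Legal) (hu₀ : u₀ ∈ H.V) (hu' : u' ∉ H.V)
    {w : ℕ} (hw : w ∈ H.V) :
    (H.addTwin u₀ u').classCount ((H.edgesAt w).image (tw u₀ u')) =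
      H.classCount (H.edgesAt w) +
        (if H.edgesAt u₀ = H.edgesAt w then 1 else 0) := by
  classical
  have hcancel : ∀ x ∈ H.V, ((H.edgesAt x).image (tw u₀ u') = (H.edgesAt w).image (tw u₀ u'))
      ↔ H.edgesAt x = H.edgesAt w := by
    intro x hx
    constructor
    · intro h
      exact image_cancel (tw_injOn hL hu') (by exact_mod_cast edgesAt_subset H x)
        (by exact_mod_cast edgesAt_subset H w) h
    · intro h; rw [h]
  show ((insert u' H.V).filter
      (fun x => (H.addTwin u₀ u').edgesAt x = (H.edgesAt w).image (tw u₀ u'))).card = _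
  rw [Finset.filter_insert]
  have hVpart : (H.V.filter
      (fun x => (H.addTwin u₀ u').edgesAt x = (H.edgesAt w).image (tw u₀ u'))) =
      H.V.filter (fun x => H.edgesAt x = H.edgesAt w) := by
    apply Finset.filter_congr
    intro x hx
    rw [edgesAt_addTwin hL hu' hx]
    exact hcancel x hx
  have hnew : ((H.addTwin u₀ u').edgesAt u' = (H.edgesAt w).image (tw u₀ u')) ↔
      H.edgesAt u₀ = H.edgesAt w := by
    rw [edgesAt_addTwin_new hL hu']
    exact hcancel u₀ hu₀
  by_cases c : H.edgesAt u₀ = H.edgesAt w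
  · rw [if_pos (hnew.2 c), if_pos c]
    rw [Finset.card_insert_of_notMem (fun h => hu' (Finset.mem_of_mem_filter _ h)), hVpart]
    rfl
  · rw [if_neg (fun h => c (hnew.1 h)), if_neg c, hVpart]
    simp [classCount]

end AddTwin

lemma grow (S : Set FinHypergraph)
    (hSiso : ∀ H ∈ S, ∀ H' : FinHypergraph, H'.Legal → H.Isomorphic H' → H' ∈ S)
    (hStwin : ∀ H ∈ S, ∀ v ∈ H.V, ∀ v' : ℕ, v' ∉ H.V → H.addTwin v v' ∈ S) :
    ∀ n : ℕ, ∀ H H' : FinHypergraph, ∀ φ : Finset ℕ → Finset ℕ,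
      H.Legal → H'.Legal → H ∈ S →
      Set.InjOn φ ↑H.E → H.E.image φ = H'.E →
      (∀ w ∈ H'.V, ∃ u ∈ H.V, H'.edgesAt w = (H.edgesAt u).image φ) →
      (∀ u ∈ H.V, H.classCount (H.edgesAt u) ≤ H'.classCount ((H.edgesAt u).image φ)) →
      (∑ t ∈ H.V.image H.edgesAt,
        (H'.classCount (t.image φ) - H.classCount t)) ≤ n →
      H' ∈ S := by
  intro n
  induction n with
  | zero =>
    intro H H' φ hL hL' hmem hinj himg hrev hcnt hsum
    refine hSiso H hmem H' hL' (isomorphic_of_counts H H' φ hL hL' hinj himg hrev ?_)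
    intro u hu
    refine le_antisymm (hcnt u hu) ?_
    have hz : ∀ t ∈ H.V.image H.edgesAt,
        H'.classCount (t.image φ) - H.classCount t = 0 :=
      Finset.sum_eq_zero_iff.1 (Nat.le_zero.1 hsum)
    have := hz (H.edgesAt u) (mem_image_of_mem _ hu)
    omega
  | succ n ih =>
    intro H H' φ hL hL' hmem hinj himg hrev hcnt hsum
    by_cases hbc : ∀ u ∈ H.V, H.classCount (H.edgesAt u) =
        H'.classCount ((H.edgesAt u).image φ)
    · exact hSiso H hmem H' hL' (isomorphic_of_counts H H' φ hL hL' hinj himg hrev hbc)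
    push_neg at hbc
    obtain ⟨u₀, hu₀, hne⟩ := hbc
    have hstrict : H.classCount (H.edgesAt u₀) < H'.classCount ((H.edgesAt u₀).image φ) :=
      lt_of_le_of_ne (hcnt u₀ hu₀) hne
    obtain ⟨u', hu'⟩ := Infinite.exists_notMem_finset H.V
    set H₂ := H.addTwin u₀ u' with hH₂
    set φ₂ : Finset ℕ → Finset ℕ := fun G => φ (G.erase u') with hφ₂
    have hkey : ∀ F ∈ H.E, φ₂ (tw u₀ u' F) = φ F := by
      intro F hF
      have hn := not_mem_of_legal hL hu' F hF
      by_cases c : u₀ ∈ F <;>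
        simp [hφ₂, tw, c, Finset.erase_insert, hn, Finset.erase_eq_of_notMem]
    have hL₂ : H₂.Legal := addTwin_legal hL hu₀
    have hmem₂ : H₂ ∈ S := hStwin H hmem u₀ hu₀ u' hu'
    have hE₂ : H₂.E = H.E.image (tw u₀ u') := rfl
    have hinj₂ : Set.InjOn φ₂ ↑H₂.E := by
      intro G₁ h₁ G₂ h₂ h
      simp only [Finset.mem_coe, hE₂] at h₁ h₂
      obtain ⟨F₁, hF₁, rfl⟩ := mem_image.1 h₁
      obtain ⟨F₂, hF₂, rfl⟩ := mem_image.1 h₂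
      rw [hkey F₁ hF₁, hkey F₂ hF₂] at h
      rw [hinj (by exact_mod_cast hF₁) (by exact_mod_cast hF₂) h]
    have himg₂ : H₂.E.image φ₂ = H'.E := by
      rw [hE₂, Finset.image_image]
      exact (Finset.image_congr (fun F hF => hkey F (by exact_mod_cast hF))).trans himg
    -- edges-at images transfer
    have htw : ∀ x ∈ H.V, ((H.edgesAt x).image (tw u₀ u')).image φ₂ = (H.edgesAt x).image φ := by
      intro x hx
      rw [Finset.image_image]
      exact Finset.image_congr (fun F hF => hkey F (edgesAt_subset H x hF))
    have htrans : ∀ x ∈ H.V, (H₂.edgesAt x).image φ₂ = (H.edgesAt x).image φ := by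
      intro x hx
      rw [edgesAt_addTwin hL hu' hx]
      exact htw x hx
    have hrev₂ : ∀ w ∈ H'.V, ∃ u ∈ H₂.V, H'.edgesAt w = (H₂.edgesAt u).image φ₂ := by
      intro w hw
      obtain ⟨u, hu, hwu⟩ := hrev w hw
      exact ⟨u, Finset.mem_insert_of_mem hu, by rw [htrans u hu]; exact hwu⟩
    have hV₂ : H₂.V = insert u' H.V := rfl
    have main : ∀ w ∈ H.V,
        H₂.classCount ((H.edgesAt w).image (tw u₀ u')) ≤
          H'.classCount ((H.edgesAt w).image φ) := by
      intro w hw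
      rw [classCount_addTwin hL hu₀ hu' hw]
      by_cases c : H.edgesAt u₀ = H.edgesAt w
      · rw [if_pos c, ← c]
        omega
      · rw [if_neg c]
        simpa using hcnt w hw
    have hcnt₂ : ∀ x ∈ H₂.V,
        H₂.classCount (H₂.edgesAt x) ≤ H'.classCount ((H₂.edgesAt x).image φ₂) := by
      intro x hx
      rw [hV₂, Finset.mem_insert] at hx
      rcases hx with rfl | hx
      · rw [edgesAt_addTwin_new hL hu', htw u₀ hu₀]
        exact main u₀ hu₀
      · rw [edgesAt_addTwin hL hu' hx, htw x hx]
        exact main x hx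
    -- the measure decreases
    have htraces : H₂.V.image H₂.edgesAt =
        (H.V.image H.edgesAt).image (fun t => t.image (tw u₀ u')) := by
      have h1 : H₂.V.image H₂.edgesAt = insert ((H.edgesAt u₀).image (tw u₀ u'))
          (H.V.image ((fun t => t.image (tw u₀ u')) ∘ H.edgesAt)) := by
        rw [hV₂, Finset.image_insert, edgesAt_addTwin_new hL hu']
        congr 1
        exact Finset.image_congr (fun x hx => edgesAt_addTwin hL hu' (by exact_mod_cast hx))
      rw [h1, ← Finset.image_image]
      exact Finset.insert_eq_self.2 (mem_image_of_mem _ (mem_image_of_mem _ hu₀))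
    have hsum₂ : (∑ t ∈ H₂.V.image H₂.edgesAt,
        (H'.classCount (t.image φ₂) - H₂.classCount t)) ≤ n := by
      rw [htraces, Finset.sum_image (by
        intro t₁ h₁ t₂ h₂ h
        obtain ⟨x₁, hx₁, rfl⟩ := mem_image.1 h₁
        obtain ⟨x₂, hx₂, rfl⟩ := mem_image.1 h₂
        exact image_cancel (tw_injOn hL hu') (by exact_mod_cast edgesAt_subset H x₁)
          (by exact_mod_cast edgesAt_subset H x₂) h)]
      have hterm : ∀ t ∈ H.V.image H.edgesAt,
          H'.classCount ((t.image (tw u₀ u')).image φ₂) - H₂.classCount (t.image (tw u₀ u'))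
            = H'.classCount (t.image φ) - (H.classCount t +
                (if H.edgesAt u₀ = t then 1 else 0)) := by
        intro t ht
        obtain ⟨x, hx, rfl⟩ := mem_image.1 ht
        rw [htw x hx, classCount_addTwin hL hu₀ hu' hx]
      rw [Finset.sum_congr rfl hterm]
      have ht₀ : H.edgesAt u₀ ∈ H.V.image H.edgesAt := mem_image_of_mem _ hu₀
      rw [← Finset.add_sum_erase _ _ ht₀] at hsum ⊢
      have herase : ∀ t ∈ (H.V.image H.edgesAt).erase (H.edgesAt u₀),
          H'.classCount (t.image φ) - (H.classCount t +
              (if H.edgesAt u₀ = t then 1 else 0)) =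
            H'.classCount (t.image φ) - H.classCount t := by
        intro t ht
        rw [if_neg (fun h => (Finset.ne_of_mem_erase ht) h.symm)]
        omega
      rw [Finset.sum_congr rfl herase]
      rw [if_pos rfl]
      omega
    exact ih H₂ H' φ₂ hL₂ hL' hmem₂ hinj₂ himg₂ hrev₂ hcnt₂ hsum₂

section Delete

variable {H : FinHypergraph} {u v : ℕ}

lemma twin_mem_iff (htwin : H.edgesAt u = H.edgesAt v) {F : Finset ℕ} (hF : F ∈ H.E) :
    u ∈ F ↔ v ∈ F := by
  constructor
  · intro h
    exact (mem_edgesAt.1 (htwin ▸ mem_edgesAt.2 ⟨hF, h⟩)).2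
  · intro h
    exact (mem_edgesAt.1 (htwin.symm ▸ mem_edgesAt.2 ⟨hF, h⟩)).2

lemma erase_injOn (huv : u ≠ v) (htwin : H.edgesAt u = H.edgesAt v) :
    Set.InjOn (fun F => Finset.erase F v) ↑H.E := by
  intro F₁ h₁ F₂ h₂ h
  simp only [Finset.mem_coe] at h₁ h₂
  simp only at h
  by_cases c₁ : v ∈ F₁ <;> by_cases c₂ : v ∈ F₂
  · rw [← Finset.insert_erase c₁, ← Finset.insert_erase c₂, h]
  · exfalso
    have hu1 : u ∈ F₁ := (twin_mem_iff htwin h₁).2 c₁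
    have : u ∈ F₁.erase v := Finset.mem_erase.2 ⟨huv, hu1⟩
    rw [h] at this
    have : u ∈ F₂ := Finset.mem_of_mem_erase this
    exact c₂ ((twin_mem_iff htwin h₂).1 this)
  · exfalso
    have hu2 : u ∈ F₂ := (twin_mem_iff htwin h₂).2 c₂
    have : u ∈ F₂.erase v := Finset.mem_erase.2 ⟨huv, hu2⟩
    rw [← h] at this
    have : u ∈ F₁ := Finset.mem_of_mem_erase this
    exact c₁ ((twin_mem_iff htwin h₁).1 this)
  · rwa [Finset.erase_eq_of_notMem c₁, Finset.erase_eq_of_notMem c₂] at h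

lemma delete_legal (hL : H.Legal) (hu : u ∈ H.V) (huv : u ≠ v)
    (htwin : H.edgesAt u = H.edgesAt v) : (H.delete v).Legal := by
  intro G hG
  obtain ⟨F, hF, rfl⟩ := mem_image.1 hG
  refine ⟨Finset.erase_subset_erase v (hL F hF).1, ?_⟩
  by_cases c : v ∈ F
  · exact ⟨u, Finset.mem_erase.2 ⟨huv, (twin_mem_iff htwin hF).2 c⟩⟩
  · rw [Finset.erase_eq_of_notMem c]
    exact (hL F hF).2

lemma edgesAt_delete {w : ℕ} (hwv : w ≠ v) :
    (H.delete v).edgesAt w = (H.edgesAt w).image (fun F => Finset.erase F v) := by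
  show ((H.E.image (fun F => F.erase v)).filter (fun F => w ∈ F)) = _
  rw [Finset.filter_image]
  congr 1
  apply Finset.filter_congr
  intro F _
  simp [Finset.mem_erase, hwv]

/-- The hypergraph is recovered from its `v`-deletion by adding `v` back as a twin
of a twin `u`. -/
lemma addTwin_delete (hL : H.Legal) (hu : u ∈ H.V) (hv : v ∈ H.V) (huv : u ≠ v)
    (htwin : H.edgesAt u = H.edgesAt v) : (H.delete v).addTwin u v = H := by
  apply hext
  · exact Finset.insert_erase hv
  · show (H.E.image (fun F => F.erase v)).image (fun F => if u ∈ F then insert v F else F) = H.E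
    rw [Finset.image_image]
    have : ∀ F ∈ H.E,
        ((fun F => if u ∈ F then insert v F else F) ∘ (fun F => F.erase v)) F = F := by
      intro F hF
      simp only [Function.comp_apply]
      by_cases c : v ∈ F
      · have hu1 : u ∈ F := (twin_mem_iff htwin hF).2 c
        rw [if_pos (Finset.mem_erase.2 ⟨huv, hu1⟩), Finset.insert_erase c]
      · have hu1 : u ∉ F := fun h => c ((twin_mem_iff htwin hF).1 h)
        rw [Finset.erase_eq_of_notMem c, if_neg hu1]
    have h2 := Finset.image_congr (g := id) this
    rw [h2, Finset.image_id]

lemma mem_of_delete_mem (S : Set FinHypergraph)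
    (hStwin : ∀ H ∈ S, ∀ v ∈ H.V, ∀ v' : ℕ, v' ∉ H.V → H.addTwin v v' ∈ S)
    (hL : H.Legal) (hu : u ∈ H.V) (hv : v ∈ H.V) (huv : u ≠ v)
    (htwin : H.edgesAt u = H.edgesAt v) (hdel : H.delete v ∈ S) : H ∈ S := by
  have h1 : u ∈ (H.delete v).V := Finset.mem_erase.2 ⟨huv, hu⟩
  have h2 : v ∉ (H.delete v).V := Finset.notMem_erase v H.V
  have := hStwin (H.delete v) hdel u h1 v h2
  rwa [addTwin_delete hL hu hv huv htwin] at this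

end Delete

lemma key_step (S : Set FinHypergraph)
    (hSiso : ∀ H ∈ S, ∀ H' : FinHypergraph, H'.Legal → H.Isomorphic H' → H' ∈ S)
    (hStwin : ∀ H ∈ S, ∀ v ∈ H.V, ∀ v' : ℕ, v' ∉ H.V → H.addTwin v v' ∈ S)
    (m : ℕ) (K L : FinHypergraph) (hKL : K.Legal) (hLL : L.Legal) (hKS : K ∈ S)
    (eK eL : Fin m → Finset ℕ)
    (hKmem : ∀ a, eK a ∈ K.E) (hLmem : ∀ a, eL a ∈ L.E)
    (hKinj : Function.Injective eK) (hLinj : Function.Injective eL)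
    (hKsurj : ∀ F ∈ K.E, ∃ a, eK a = F) (hLsurj : ∀ F ∈ L.E, ∃ a, eL a = F)
    (v u : ℕ) (hv : v ∈ L.V) (hu : u ∈ L.V) (huv : u ≠ v)
    (htwin : L.edgesAt u = L.edgesAt v)
    (hsupp : K.V.image (fun x => Finset.univ.filter (fun a => x ∈ eK a)) =
             L.V.image (fun x => Finset.univ.filter (fun a => x ∈ eL a)))
    (hAv : ∀ A : Finset (Fin m),
      (K.V.filter (fun x => Finset.univ.filter (fun a => x ∈ eK a) = A)).card ≤
      (L.V.filter (fun x => Finset.univ.filter (fun a => x ∈ eL a) = A)).card)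
    (hAstrict :
      (K.V.filter (fun x => Finset.univ.filter (fun a => x ∈ eK a) =
          Finset.univ.filter (fun a => v ∈ eL a))).card <
      (L.V.filter (fun x => Finset.univ.filter (fun a => x ∈ eL a) =
          Finset.univ.filter (fun a => v ∈ eL a))).card) :
    L.delete v ∈ S := by
  classical
  set AK : ℕ → Finset (Fin m) := fun x => Finset.univ.filter (fun a => x ∈ eK a) with hAK
  set AL : ℕ → Finset (Fin m) := fun x => Finset.univ.filter (fun a => x ∈ eL a) with hAL
  -- edge-at descriptions
  have hedK : ∀ x, K.edgesAt x = (AK x).image eK := by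
    intro x
    ext F
    simp only [mem_edgesAt, Finset.mem_image, hAK, Finset.mem_filter, Finset.mem_univ, true_and]
    constructor
    · rintro ⟨hE, hx⟩
      obtain ⟨a, rfl⟩ := hKsurj F hE
      exact ⟨a, hx, rfl⟩
    · rintro ⟨a, hx, rfl⟩
      exact ⟨hKmem a, hx⟩
  have hedL : ∀ x, L.edgesAt x = (AL x).image eL := by
    intro x
    ext F
    simp only [mem_edgesAt, Finset.mem_image, hAL, Finset.mem_filter, Finset.mem_univ, true_and]
    constructor
    · rintro ⟨hE, hx⟩
      obtain ⟨a, rfl⟩ := hLsurj F hE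
      exact ⟨a, hx, rfl⟩
    · rintro ⟨a, hx, rfl⟩
      exact ⟨hLmem a, hx⟩
  have hAKiff : ∀ x z, AK x = AK z ↔ K.edgesAt x = K.edgesAt z := by
    intro x z
    constructor
    · intro h; rw [hedK, hedK, h]
    · intro h
      ext a
      simp only [hAK, Finset.mem_filter, Finset.mem_univ, true_and]
      have h1 : (x ∈ eK a) ↔ eK a ∈ K.edgesAt x := by simp [mem_edgesAt, hKmem a]
      have h2 : (z ∈ eK a) ↔ eK a ∈ K.edgesAt z := by simp [mem_edgesAt, hKmem a]
      rw [h1, h2, h]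
  have hALiff : ∀ x z, AL x = AL z ↔ L.edgesAt x = L.edgesAt z := by
    intro x z
    constructor
    · intro h; rw [hedL, hedL, h]
    · intro h
      ext a
      simp only [hAL, Finset.mem_filter, Finset.mem_univ, true_and]
      have h1 : (x ∈ eL a) ↔ eL a ∈ L.edgesAt x := by simp [mem_edgesAt, hLmem a]
      have h2 : (z ∈ eL a) ↔ eL a ∈ L.edgesAt z := by simp [mem_edgesAt, hLmem a]
      rw [h1, h2, h]
  -- the deleted-edge map
  set g : Fin m → Finset ℕ := fun a => (eL a).erase v with hgdef
  have herinj : Set.InjOn (fun F => Finset.erase F v) ↑L.E := erase_injOn huv htwin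
  have hginj : Function.Injective g := by
    intro a b h
    exact hLinj (herinj (by exact_mod_cast hLmem a) (by exact_mod_cast hLmem b) h)
  have hL' : (L.delete v).Legal := delete_legal hLL hu huv htwin
  -- the edge correspondence φ
  set φ : Finset ℕ → Finset ℕ :=
    fun F => if h : F ∈ K.E then g (hKsurj F h).choose else ∅ with hφdef
  have hφ : ∀ a, φ (eK a) = g a := by
    intro a
    have h : eK a ∈ K.E := hKmem a
    have hc : eK (hKsurj (eK a) h).choose = eK a := (hKsurj (eK a) h).choose_spec
    simp only [hφdef, dif_pos h, hKinj hc]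
  have himφ : ∀ A : Finset (Fin m), (A.image eK).image φ = A.image g := by
    intro A
    rw [Finset.image_image]
    exact Finset.image_congr (fun a _ => hφ a)
  have himg : ∀ A : Finset (Fin m), (A.image eL).image (fun F => Finset.erase F v) = A.image g := by
    intro A
    rw [Finset.image_image]
    rfl
  -- grow hypothesis: injectivity of φ on K.E
  have hinjφ : Set.InjOn φ ↑K.E := by
    intro F₁ h₁ F₂ h₂ h
    simp only [Finset.mem_coe] at h₁ h₂
    obtain ⟨a₁, rfl⟩ := hKsurj F₁ h₁
    obtain ⟨a₂, rfl⟩ := hKsurj F₂ h₂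
    rw [hφ, hφ] at h
    rw [hginj h]
  -- grow hypothesis: φ maps edges onto deleted edges
  have himgE : K.E.image φ = (L.delete v).E := by
    show _ = L.E.image (fun F => F.erase v)
    ext G
    simp only [Finset.mem_image]
    constructor
    · rintro ⟨F, hF, rfl⟩
      obtain ⟨a, rfl⟩ := hKsurj F hF
      exact ⟨eL a, hLmem a, (hφ a).symm⟩
    · rintro ⟨F, hF, rfl⟩
      obtain ⟨a, rfl⟩ := hLsurj F hF
      exact ⟨eK a, hKmem a, hφ a⟩
  -- edgesAt of the deletion
  have hedD : ∀ w ∈ L.V, w ≠ v → (L.delete v).edgesAt w = (AL w).image g := by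
    intro w _ hwv
    rw [edgesAt_delete hwv, hedL w, himg]
  -- grow hypothesis: reverse support
  have hrev : ∀ w ∈ (L.delete v).V, ∃ x ∈ K.V,
      (L.delete v).edgesAt w = (K.edgesAt x).image φ := by
    intro w hw
    have hwv : w ≠ v := Finset.ne_of_mem_erase hw
    have hwL : w ∈ L.V := Finset.mem_of_mem_erase hw
    have : AL w ∈ L.V.image AL := Finset.mem_image_of_mem _ hwL
    rw [← hsupp] at this
    obtain ⟨x, hx, hxw⟩ := Finset.mem_image.1 this
    refine ⟨x, hx, ?_⟩
    rw [hedD w hwL hwv, hedK x, himφ, hxw]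
  -- grow hypothesis: counts
  have hcntK : ∀ x, K.classCount (K.edgesAt x) = (K.V.filter (fun z => AK z = AK x)).card := by
    intro x
    unfold classCount
    congr 1
    apply Finset.filter_congr
    intro z _
    exact (hAKiff z x).symm
  have hstrict' : (K.V.filter (fun z => AK z = AL v)).card <
      (L.V.filter (fun w => AL w = AL v)).card := hAstrict
  have hcnt : ∀ x ∈ K.V, K.classCount (K.edgesAt x) ≤
      (L.delete v).classCount ((K.edgesAt x).image φ) := by
    intro x hx
    rw [hcntK x]
    have hR : (L.delete v).classCount ((K.edgesAt x).image φ) =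
        ((L.V.filter (fun w => AL w = AK x)).erase v).card := by
      unfold classCount
      rw [hedK x, himφ]
      show ((L.V.erase v).filter (fun w => (L.delete v).edgesAt w = (AK x).image g)).card = _
      congr 1
      rw [← Finset.filter_erase]
      apply Finset.filter_congr
      intro w hw
      have hwv : w ≠ v := Finset.ne_of_mem_erase hw
      have hwL : w ∈ L.V := Finset.mem_of_mem_erase hw
      rw [hedD w hwL hwv]
      constructor
      · intro h
        exact image_cancel (f := g) (s := Set.univ) (fun p _ q _ h' => hginj h')
          (Set.subset_univ _) (Set.subset_univ _) h
      · intro h; rw [h]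
    rw [hR]
    by_cases hc : AL v = AK x
    · have hvmem : v ∈ L.V.filter (fun w => AL w = AK x) := Finset.mem_filter.2 ⟨hv, hc⟩
      rw [Finset.card_erase_of_mem hvmem]
      rw [hc] at hstrict'
      have hle := hAv (AK x)
      omega
    · have hvnot : v ∉ L.V.filter (fun w => AL w = AK x) :=
        fun h => hc (Finset.mem_filter.1 h).2
      rw [Finset.erase_eq_of_notMem hvnot]
      exact hAv (AK x)
  exact grow S hSiso hStwin
    (∑ t ∈ K.V.image K.edgesAt, ((L.delete v).classCount (t.image φ) - K.classCount t))
    K (L.delete v) φ hKL hL' hKS hinjφ himgE hrev hcnt (le_refl _)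

end FinHypergraph

open FinHypergraph Finset

/-- Let `S` be a class of hypergraphs closed under isomorphism and
under adding twins. Then for every `m` there is `ψ(m)` such that for every
hypergraph `H` with exactly `m` hyperedges and every vertex `v` whose twin
class has more than `ψ(m)` vertices, `H ∈ S` iff `H − v ∈ S`. -/
theorem twin_truncation_for_twin_closed_classes
    (S : Set FinHypergraph)
    (hSlegal : ∀ H ∈ S, H.Legal)
    (hSiso : ∀ H ∈ S, ∀ H' : FinHypergraph, H'.Legal → H.Isomorphic H' → H' ∈ S)
    (hStwin : ∀ H ∈ S, ∀ v ∈ H.V, ∀ v' : ℕ, v' ∉ H.V → H.addTwin v v' ∈ S) :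
    ∀ m : ℕ, ∃ ψ : ℕ, ∀ H : FinHypergraph, H.Legal → H.E.card = m →
      ∀ v ∈ H.V, ψ < (H.twinClass v).card → (H ∈ S ↔ H.delete v ∈ S) := by
  intro m
  by_contra hcon
  push_neg at hcon
  classical
  -- extract counterexamples: H ∈ S but H − v ∉ S, with huge twin class
  have hCE : ∀ n : ℕ, ∃ (H : FinHypergraph) (v : ℕ), H.Legal ∧ H.E.card = m ∧ v ∈ H.V ∧
      n + 1 < (H.twinClass v).card ∧ H ∈ S ∧ H.delete v ∉ S := by
    intro n
    obtain ⟨H, hL, hm, v, hv, hc, hniff⟩ := hcon (n + 1)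
    have h2 : 1 < (H.twinClass v).card := lt_of_le_of_lt (by omega) hc
    obtain ⟨u, hu, huv⟩ := Finset.exists_mem_ne h2 v
    have hu2 : u ∈ H.V ∧ H.edgesAt u = H.edgesAt v := Finset.mem_filter.1 hu
    have hback : H.delete v ∈ S → H ∈ S :=
      mem_of_delete_mem S hStwin hL hu2.1 hv huv hu2.2
    have hHS : H ∈ S ∧ H.delete v ∉ S := by tauto
    exact ⟨H, v, hL, hm, hv, hc, hHS.1, hHS.2⟩
  choose CH Cv hLeg hm hvV hbig hmemS hdelS using hCE
  -- twins
  have hCU : ∀ n : ℕ, ∃ u, u ∈ (CH n).V ∧ (CH n).edgesAt u = (CH n).edgesAt (Cv n) ∧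
      u ≠ Cv n := by
    intro n
    have h2 : 1 < ((CH n).twinClass (Cv n)).card := lt_of_le_of_lt (by omega) (hbig n)
    obtain ⟨u, hu, huv⟩ := Finset.exists_mem_ne h2 (Cv n)
    have := Finset.mem_filter.1 hu
    exact ⟨u, this.1, this.2, huv⟩
  choose Cu hCuV hCutwin hCune using hCU
  -- edge enumerations
  set e : ∀ n : ℕ, Fin m → Finset ℕ :=
    fun n a => ((Finset.equivFinOfCardEq (hm n)).symm a : Finset ℕ) with he_def
  have he_mem : ∀ n a, e n a ∈ (CH n).E := fun n a => Finset.coe_mem _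
  have he_inj : ∀ n, Function.Injective (e n) := by
    intro n a b h
    exact (Finset.equivFinOfCardEq (hm n)).symm.injective (Subtype.ext h)
  have he_surj : ∀ n, ∀ F ∈ (CH n).E, ∃ a, e n a = F := by
    intro n F hF
    refine ⟨Finset.equivFinOfCardEq (hm n) ⟨F, hF⟩, ?_⟩
    simp [he_def]
  -- index traces and counts
  set Aidx : ℕ → ℕ → Finset (Fin m) :=
    fun n x => Finset.univ.filter (fun a => x ∈ e n a) with hAidx_def
  set cnt : ℕ → Finset (Fin m) → ℕ :=
    fun n A => ((CH n).V.filter (fun x => Aidx n x = A)).card with hcnt_def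
  have htcc : ∀ n, ((CH n).twinClass (Cv n)).card = cnt n (Aidx n (Cv n)) := by
    intro n
    show ((CH n).V.filter (fun x => (CH n).edgesAt x = (CH n).edgesAt (Cv n))).card = _
    congr 1
    apply Finset.filter_congr
    intro x _
    constructor
    · intro h
      ext a
      simp only [hAidx_def, Finset.mem_filter, Finset.mem_univ, true_and]
      have h1 : (x ∈ e n a) ↔ e n a ∈ (CH n).edgesAt x := by simp [mem_edgesAt, he_mem n a]
      have h2 : (Cv n ∈ e n a) ↔ e n a ∈ (CH n).edgesAt (Cv n) := by
        simp [mem_edgesAt, he_mem n a]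
      rw [h1, h2, h]
    · intro h
      ext F
      simp only [mem_edgesAt]
      constructor
      · rintro ⟨hE, hx⟩
        obtain ⟨a, rfl⟩ := he_surj n F hE
        have ha : a ∈ Aidx n x := by
          simp only [hAidx_def, Finset.mem_filter, Finset.mem_univ, true_and]; exact hx
        rw [h] at ha
        simp only [hAidx_def, Finset.mem_filter, Finset.mem_univ, true_and] at ha
        exact ⟨hE, ha⟩
      · rintro ⟨hE, hx⟩
        obtain ⟨a, rfl⟩ := he_surj n F hE
        have ha : a ∈ Aidx n (Cv n) := by
          simp only [hAidx_def, Finset.mem_filter, Finset.mem_univ, true_and]; exact hx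
        rw [← h] at ha
        simp only [hAidx_def, Finset.mem_filter, Finset.mem_univ, true_and] at ha
        exact ⟨hE, ha⟩
  -- pigeonhole on the finite part of the signature
  set sig : ℕ → Finset (Fin m) × Finset (Finset (Fin m)) :=
    fun n => (Aidx n (Cv n), (CH n).V.image (fun x => Aidx n x)) with hsig_def
  obtain ⟨y, hy⟩ := Finite.exists_infinite_fiber sig
  have hyinf : {n | sig n = y}.Infinite := Set.infinite_coe_iff.1 hy
  set N : ℕ → ℕ := fun k => Nat.nth (fun n => sig n = y) k with hN_def
  have hsigN : ∀ k, sig (N k) = y := fun k => Nat.nth_mem_of_infinite hyinf k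
  have hleN : ∀ k, k ≤ N k := fun k => Nat.le_nth (fun hf => absurd hf hyinf)
  -- Dickson's lemma
  obtain ⟨gm, hgm⟩ := (Set.isPWO_of_wellQuasiOrderedLE
    (Set.univ : Set (Finset (Fin m) → ℕ))).exists_monotone_subseq
    (f := fun k => cnt (N k)) (fun _ => Set.mem_univ _)
  set i : ℕ := N (gm 0) with hi_def
  set k₂ : ℕ := cnt i (Aidx i (Cv i)) with hk₂_def
  set j : ℕ := N (gm k₂) with hj_def
  have hAi : Aidx i (Cv i) = y.1 := congrArg Prod.fst (hsigN (gm 0))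
  have hAj : Aidx j (Cv j) = y.1 := congrArg Prod.fst (hsigN (gm k₂))
  have hsuppi : (CH i).V.image (fun x => Aidx i x) = y.2 := congrArg Prod.snd (hsigN (gm 0))
  have hsuppj : (CH j).V.image (fun x => Aidx j x) = y.2 := congrArg Prod.snd (hsigN (gm k₂))
  have hmono : ∀ A, cnt i A ≤ cnt j A := fun A => hgm (Nat.zero_le k₂) A
  have hstrict : cnt i (Aidx j (Cv j)) < cnt j (Aidx j (Cv j)) := by
    have h1 : cnt j (Aidx j (Cv j)) = ((CH j).twinClass (Cv j)).card := (htcc j).symm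
    have h2 : j + 1 < ((CH j).twinClass (Cv j)).card := hbig j
    have h3 : k₂ ≤ j := le_trans (gm.strictMono.le_apply) (hleN (gm k₂))
    have h4 : cnt i (Aidx j (Cv j)) = k₂ := by rw [hAj, ← hAi]
    omega
  -- apply the key step
  have hdel : (CH j).delete (Cv j) ∈ S := by
    apply key_step S hSiso hStwin m (CH i) (CH j) (hLeg i) (hLeg j) (hmemS i)
      (e i) (e j) (he_mem i) (he_mem j) (he_inj i) (he_inj j)
      (fun F hF => he_surj i F hF) (fun F hF => he_surj j F hF)
      (Cv j) (Cu j) (hvV j) (hCuV j) (hCune j) (hCutwin j)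
    · rw [hsuppi, hsuppj]
    · intro A
      exact hmono A
    · exact hstrict
  exact hdelS j hdel
end

section
/- Let k ∈ ℕ and let S be a set of functions x : Fin k → ℕ that is upward closed with respect to the pointwise order, i.e., whenever x ∈ S and x i ≤ y i for all i ∈ Fin k, then y ∈ S. Then there exists N ∈ ℕ such that for every x : Fin k → ℕ we have x ∈ S if and only if the pointwise truncation (fun i => min (x i) N) is in S. -/
/-- For every upward-closed set `S` of functions `Fin k → ℕ`
(with respect to the pointwise order), there is an `N` such that membership in
`S` is unaffected by truncating all values at `N`. -/
theorem upward_closed_truncation (k : ℕ) (S : Set (Fin k → ℕ))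
    (hS : ∀ x ∈ S, ∀ y : Fin k → ℕ, (∀ i : Fin k, x i ≤ y i) → y ∈ S) :
    ∃ N : ℕ, ∀ x : Fin k → ℕ, x ∈ S ↔ (fun i => min (x i) N) ∈ S := by
  have hpwo : S.IsPWO := Set.isPWO_of_wellQuasiOrderedLE S
  -- the set of minimal elements of S
  set M : Set (Fin k → ℕ) := {m | m ∈ S ∧ ∀ y ∈ S, ¬ y < m} with hM
  -- every element of S dominates a minimal element
  have hdom : ∀ x ∈ S, ∃ m ∈ M, m ≤ x := by
    intro x hx
    set T : Set (Fin k → ℕ) := {y | y ∈ S ∧ y ≤ x} with hT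
    have hTwf : T.IsWF := hpwo.isWF.mono (fun y hy => hy.1)
    have hTne : T.Nonempty := ⟨x, hx, le_refl x⟩
    refine ⟨hTwf.min hTne, ⟨(hTwf.min_mem hTne).1, ?_⟩, (hTwf.min_mem hTne).2⟩
    intro y hy hlt
    exact hTwf.not_lt_min hTne ⟨hy, hlt.le.trans (hTwf.min_mem hTne).2⟩ hlt
  -- M is an antichain, hence finite
  have hanti : IsAntichain (· ≤ ·) M := by
    intro a ha b hb hne hle
    exact hb.2 a ha.1 (lt_of_le_of_ne hle hne)
  have hMfin : M.Finite :=
    hanti.finite_of_partiallyWellOrderedOn (hpwo.mono (fun m hm => hm.1))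
  -- M is bounded above
  obtain ⟨b, hb⟩ := hMfin.bddAbove
  refine ⟨Finset.univ.sup b, fun x => ⟨?_, ?_⟩⟩
  · intro hx
    obtain ⟨m, hm, hmx⟩ := hdom x hx
    refine hS m hm.1 _ (fun i => le_min (hmx i) ?_)
    exact (hb hm i).trans (Finset.le_sup (Finset.mem_univ i))
  · intro h
    exact hS _ h x (fun i => min_le_left _ _)
end

section
/- Let H = (V, ℰ) be a hypergraph and let u, v ∈ V be distinct twins of H. If G is a support for H − v with vertex set V ∖ {v}, then the graph on vertex set V obtained from G by adding v together with the single edge {v, u} is a support for H. -/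
/-- A hypergraph: a finite vertex set `V ⊆ ℕ` together with a finite family of
hyperedges, each a subset of `V` of size at least 2. -/
structure NatHypergraph where
  V : Finset ℕ
  E : Finset (Finset ℕ)
  edge_sub : ∀ F ∈ E, F ⊆ V
  edge_card : ∀ F ∈ E, 2 ≤ F.card

namespace NatHypergraph

/-- `ℰ(v)`: the set of hyperedges incident with `v`. -/
def edgesAt (H : NatHypergraph) (v : ℕ) : Finset (Finset ℕ) :=
  H.E.filter (fun F => v ∈ F)

/-- `w` covers `v` if `ℰ(v) ⊆ ℰ(w)`. -/
def Covers (H : NatHypergraph) (w v : ℕ) : Prop :=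
  H.edgesAt v ⊆ H.edgesAt w

/-- `u` and `v` are twins if `ℰ(u) = ℰ(v)`. -/
def AreTwins (H : NatHypergraph) (u v : ℕ) : Prop :=
  H.edgesAt u = H.edgesAt v

/-- The twin class of `v`: all vertices with the same incident hyperedges as `v`. -/
def twinClass (H : NatHypergraph) (v : ℕ) : Finset ℕ :=
  H.V.filter (fun u => H.edgesAt u = H.edgesAt v)

/-- `H − v`: delete vertex `v`, removing it from every hyperedge and discarding
   the resulting sets of size less than 2. -/
def delete (H : NatHypergraph) (v : ℕ) : NatHypergraph where
  V := H.V.erase v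
  E := (H.E.image (fun F => F.erase v)).filter (fun F => 2 ≤ F.card)
  edge_sub := by
    intro F hF
    simp only [Finset.mem_filter, Finset.mem_image] at hF
    obtain ⟨⟨F₀, hF₀, rfl⟩, -⟩ := hF
    intro x hx
    exact Finset.mem_erase.mpr ⟨(Finset.mem_erase.mp hx).1,
      H.edge_sub F₀ hF₀ (Finset.mem_erase.mp hx).2⟩
  edge_card := fun F hF => (Finset.mem_filter.mp hF).2

end NatHypergraph

/-- All edges of the graph `G` have both endpoints in `W`
    (i.e. `G` is a graph on the vertex set `W`). -/
def EdgesWithin (G : SimpleGraph ℕ) (W : Finset ℕ) : Prop :=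
  ∀ a b, G.Adj a b → a ∈ W ∧ b ∈ W

/-- `G` is a support for `H`: a graph on the vertex set of `H` in which every
    hyperedge induces a connected subgraph. -/
def IsSupport (H : NatHypergraph) (G : SimpleGraph ℕ) : Prop :=
  EdgesWithin G H.V ∧ ∀ F ∈ H.E, ((G.induce (F : Set ℕ)).Connected)

/-- `G` is a representative support for `H` with vertex set `W ⊆ H.V`:
    (i) every hyperedge `F` with `|F ∩ W| ≥ 2` induces (on `F ∩ W`) a connected
    subgraph of `G`, and (ii) every vertex outside `W` is covered by a vertex of `W`. -/
def IsRepSupport (H : NatHypergraph) (W : Finset ℕ) (G : SimpleGraph ℕ) : Prop :=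
  W ⊆ H.V ∧ EdgesWithin G W ∧
    (∀ F ∈ H.E, 2 ≤ (F ∩ W).card → ((G.induce ((F ∩ W : Finset ℕ) : Set ℕ)).Connected)) ∧
    (∀ v ∈ H.V \ W, ∃ w ∈ W, H.Covers w v)

/-- Transfer reachability through set inclusion and graph inclusion. -/
def homOfLE {G G' : SimpleGraph ℕ} (hle : G ≤ G') {s t : Set ℕ} (hst : s ⊆ t) :
    G.induce s →g G'.induce t where
  toFun := fun x => ⟨x.1, hst x.2⟩
  map_rel' := fun h => hle h

/-- If `u ≠ v` are twins of `H` and `G` is a support for `H − v`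
on the vertex set `V ∖ {v}`, then adding `v` with the single edge `{v, u}`
yields a support for `H`. -/


theorem support_add_twin_pendant
    (H : NatHypergraph) (u v : ℕ) (hu : u ∈ H.V) (hv : v ∈ H.V) (huv : u ≠ v)
    (htwin : H.AreTwins u v)
    (G : SimpleGraph ℕ) (hG : IsSupport (H.delete v) G) :
    IsSupport H (G ⊔ SimpleGraph.fromEdgeSet {s(v, u)}) := by
  obtain ⟨hGW, hGconn⟩ := hG
  have hle : G ≤ G ⊔ SimpleGraph.fromEdgeSet {s(v, u)} := le_sup_left
  constructor
  · intro a b hab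
    rw [SimpleGraph.sup_adj] at hab
    rcases hab with h | h
    · obtain ⟨ha, hb⟩ := hGW a b h
      exact ⟨Finset.mem_of_mem_erase ha, Finset.mem_of_mem_erase hb⟩
    · rw [SimpleGraph.fromEdgeSet_adj, Set.mem_singleton_iff, Sym2.eq_iff] at h
      rcases h.1 with ⟨rfl, rfl⟩ | ⟨rfl, rfl⟩
      · exact ⟨hv, hu⟩
      · exact ⟨hu, hv⟩
  · intro F hF
    by_cases hvF : v ∈ F
    · -- v ∈ F, so u ∈ F by twins
      have huF : u ∈ F := by
        have : F ∈ H.edgesAt v := Finset.mem_filter.mpr ⟨hF, hvF⟩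
        rw [← htwin] at this
        exact (Finset.mem_filter.mp this).2
      have hvu : (G ⊔ SimpleGraph.fromEdgeSet {s(v, u)}).Adj v u := by
        right
        rw [SimpleGraph.fromEdgeSet_adj]
        exact ⟨rfl, fun h => huv h.symm⟩
      have huF' : u ∈ F.erase v := Finset.mem_erase.mpr ⟨huv, huF⟩
      -- every x ∈ F reachable from u in the induced graph
      have key : ∀ x : (F : Set ℕ),
          ((G ⊔ SimpleGraph.fromEdgeSet {s(v, u)}).induce (F : Set ℕ)).Reachable x
            ⟨u, huF⟩ := by
        intro ⟨x, hx⟩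
        by_cases hxv : x = v
        · subst hxv
          exact (SimpleGraph.Adj.reachable (by exact hvu))
        · have hx' : x ∈ F.erase v := Finset.mem_erase.mpr ⟨hxv, hx⟩
          by_cases hcard : 2 ≤ (F.erase v).card
          · have hmem : F.erase v ∈ (H.delete v).E := by
              refine Finset.mem_filter.mpr ⟨Finset.mem_image.mpr ⟨F, hF, rfl⟩, hcard⟩
            have hconn := hGconn _ hmem
            have hr := hconn.preconnected ⟨x, hx'⟩ ⟨u, huF'⟩
            have hsub : ((F.erase v : Finset ℕ) : Set ℕ) ⊆ (F : Set ℕ) := by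
              intro a ha
              exact Finset.mem_of_mem_erase ha
            exact hr.map (homOfLE hle hsub)
          · -- F.erase v has card 1, so it is {u}, so x = u
            have h1 : (F.erase v).card = 1 := by
              have : 1 ≤ (F.erase v).card := Finset.card_pos.mpr ⟨u, huF'⟩
              omega
            have : F.erase v = {u} := by
              obtain ⟨a, ha⟩ := Finset.card_eq_one.mp h1
              rw [ha] at huF'
              rw [ha, Finset.mem_singleton.mp huF']
            have hxu : x = u := by
              rw [this] at hx'
              exact Finset.mem_singleton.mp hx'
            subst hxu
            rfl
      rw [SimpleGraph.connected_iff]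
      constructor
      · intro x y
        exact (key x).trans (key y).symm
      · exact ⟨⟨u, huF⟩⟩
    · -- v ∉ F
      have hFe : F.erase v = F := Finset.erase_eq_of_notMem hvF
      have hmem : F ∈ (H.delete v).E := by
        refine Finset.mem_filter.mpr ⟨Finset.mem_image.mpr ⟨F, hF, by rw [hFe]⟩,
          H.edge_card F hF⟩
      have hconn := hGconn _ hmem
      rw [SimpleGraph.connected_iff]
      constructor
      · intro x y
        exact (hconn.preconnected x y).map (homOfLE hle (fun a ha => ha))
      · exact hconn.nonempty
end

section
/- Let ℓ ≥ 1, let H = (V, ℰ) be a hypergraph, and let v ∈ V be a vertex whose twin class has at least ℓ elements. If H has a representative support with fewer than ℓ vertices, then H − v also has a representative support with fewer than ℓ vertices. -/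
/-- If the twin class of `v` has at least `ℓ ≥ 1` elements and `H`
has a representative support with fewer than `ℓ` vertices, then `H − v` also has
a representative support with fewer than `ℓ` vertices. -/
theorem delete_twin_keeps_small_repSupport
    (ℓ : ℕ) (hℓ : 1 ≤ ℓ)
    (H : NatHypergraph) (v : ℕ) (hv : v ∈ H.V)
    (htc : ℓ ≤ (H.twinClass v).card)
    (hrep : ∃ (W : Finset ℕ) (G : SimpleGraph ℕ), IsRepSupport H W G ∧ W.card < ℓ) :
    ∃ (W' : Finset ℕ) (G' : SimpleGraph ℕ), IsRepSupport (H.delete v) W' G' ∧ W'.card < ℓ := by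
  classical
  obtain ⟨W, G, ⟨hWV, hEW, hconn, hcov⟩, hWcard⟩ := hrep
  have hns : ¬ H.twinClass v ⊆ W := fun h =>
    absurd (Finset.card_le_card h) (by omega)
  obtain ⟨u, hu_tc, hu_nW⟩ := Finset.not_subset.mp hns
  have hu_V : u ∈ H.V := (Finset.mem_filter.mp hu_tc).1
  have hu_tw : H.edgesAt u = H.edgesAt v := (Finset.mem_filter.mp hu_tc).2
  have htwin : ∀ F ∈ H.E, (v ∈ F ↔ u ∈ F) := by
    intro F hF
    constructor
    · intro h
      have : F ∈ H.edgesAt u := hu_tw ▸ (Finset.mem_filter.mpr ⟨hF, h⟩)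
      exact (Finset.mem_filter.mp this).2
    · intro h
      have : F ∈ H.edgesAt v := hu_tw ▸ (Finset.mem_filter.mpr ⟨hF, h⟩)
      exact (Finset.mem_filter.mp this).2
  set σ : ℕ ≃ ℕ := Equiv.swap u v with hσ
  have hσv : σ v = u := Equiv.swap_apply_right u v
  have hσ_nv : ∀ w ∈ W, σ w ≠ v := by
    intro w hw h
    have : w = σ v := by
      have := congrArg σ.symm h
      simpa [hσ, Equiv.symm_apply_apply, Equiv.symm_swap] using this
    rw [hσv] at this
    exact hu_nW (this ▸ hw)
  have hσ_V : ∀ w ∈ W, σ w ∈ H.V := by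
    intro w hw
    rcases eq_or_ne w u with rfl | hwu
    · simpa [hσ] using hv
    rcases eq_or_ne w v with rfl | hwv
    · simpa [hσ] using hu_V
    · rw [hσ, Equiv.swap_apply_of_ne_of_ne hwu hwv]; exact hWV hw
  -- key membership translation
  have hkey : ∀ F ∈ H.E, ∀ w ∈ W, (w ∈ F ↔ σ w ∈ F.erase v) := by
    intro F hF w hw
    rw [Finset.mem_erase]
    have hne := hσ_nv w hw
    have hwu : w ≠ u := fun h => hu_nW (h ▸ hw)
    rcases eq_or_ne w v with rfl | hwv
    · rw [hσv]
      simp [htwin F hF, hne, hσv ▸ hne]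
    · rw [hσ, Equiv.swap_apply_of_ne_of_ne hwu hwv]
      simp [hwv]
  refine ⟨W.image σ, G.map σ.toEmbedding, ⟨?_, ?_, ?_, ?_⟩, ?_⟩
  · -- W' ⊆ (H.delete v).V
    intro x hx
    obtain ⟨w, hw, rfl⟩ := Finset.mem_image.mp hx
    exact Finset.mem_erase.mpr ⟨hσ_nv w hw, hσ_V w hw⟩
  · -- EdgesWithin
    intro a b hab
    obtain ⟨-, a', b', hadj, ha, hb⟩ := hab
    exact ⟨ha ▸ Finset.mem_image_of_mem σ (hEW a' b' hadj).1,
           hb ▸ Finset.mem_image_of_mem σ (hEW a' b' hadj).2⟩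
  · -- connectivity
    intro F' hF' hcard2
    obtain ⟨hFi, -⟩ := Finset.mem_filter.mp hF'
    obtain ⟨F, hF, rfl⟩ := Finset.mem_image.mp hFi
    have himg : F.erase v ∩ W.image σ = (F ∩ W).image σ := by
      ext x
      simp only [Finset.mem_inter, Finset.mem_image]
      constructor
      · rintro ⟨hxF, w, hw, rfl⟩
        exact ⟨w, ⟨(hkey F hF w hw).mpr hxF, hw⟩, rfl⟩
      · rintro ⟨w, ⟨hwF, hw⟩, rfl⟩
        exact ⟨(hkey F hF w hw).mp hwF, w, hw, rfl⟩
    rw [himg] at hcard2 ⊢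
    rw [Finset.card_image_of_injective _ σ.injective] at hcard2
    have hc := hconn F hF hcard2
    set S : Finset ℕ := F ∩ W with hS
    have hmem : ∀ x : ℕ, x ∈ (S : Set ℕ) ↔ σ x ∈ ((S.image σ : Finset ℕ) : Set ℕ) := by
      intro x
      simp only [Finset.coe_image, Set.mem_image, Finset.mem_coe]
      constructor
      · exact fun h => ⟨x, h, rfl⟩
      · rintro ⟨y, hy, h⟩
        rwa [← σ.injective h]
    have iso : (G.induce (S : Set ℕ)) ≃g
        ((G.map σ.toEmbedding).induce ((S.image σ : Finset ℕ) : Set ℕ)) := by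
      refine ⟨Equiv.subtypeEquiv σ hmem, ?_⟩
      intro a b
      simp only [Equiv.subtypeEquiv_apply, SimpleGraph.comap_adj,
        Function.Embedding.coe_subtype]
      exact SimpleGraph.map_adj_apply
    exact iso.connected_iff.mp hc
  · -- coverage
    intro x hx
    obtain ⟨hxV', hxW'⟩ := Finset.mem_sdiff.mp hx
    obtain ⟨hxv, hxV⟩ := Finset.mem_erase.mp hxV'
    have hxW : x ∉ W := by
      intro hxW
      apply hxW'
      have hxu : x ≠ u := fun h => hu_nW (h ▸ hxW)
      have : σ x = x := Equiv.swap_apply_of_ne_of_ne hxu hxv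
      exact this ▸ Finset.mem_image_of_mem σ hxW
    obtain ⟨w, hw, hwcov⟩ := hcov x (Finset.mem_sdiff.mpr ⟨hxV, hxW⟩)
    refine ⟨σ w, Finset.mem_image_of_mem σ hw, ?_⟩
    -- (H.delete v).Covers (σ w) x
    have hcov' : H.Covers (σ w) x := by
      have hwu : w ≠ u := fun h => hu_nW (h ▸ hw)
      rcases eq_or_ne w v with rfl | hwv
      · rw [hσv]
        intro F hF
        rw [hu_tw]
        exact hwcov hF
      · rwa [hσ, Equiv.swap_apply_of_ne_of_ne hwu hwv]
    intro F' hF'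
    obtain ⟨hF'E, hxF'⟩ := Finset.mem_filter.mp hF'
    obtain ⟨hFi, -⟩ := Finset.mem_filter.mp hF'E
    obtain ⟨F, hF, rfl⟩ := Finset.mem_image.mp hFi
    have hxF : x ∈ F := Finset.mem_of_mem_erase hxF'
    have hFx : F ∈ H.edgesAt x := Finset.mem_filter.mpr ⟨hF, hxF⟩
    have hFw : F ∈ H.edgesAt (σ w) := hcov' hFx
    have hwF : σ w ∈ F := (Finset.mem_filter.mp hFw).2
    exact Finset.mem_filter.mpr ⟨hF'E, Finset.mem_erase.mpr ⟨hσ_nv w hw, hwF⟩⟩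
  · -- cardinality
    rw [Finset.card_image_of_injective _ σ.injective]
    exact hWcard
end
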